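/- For any n ≥ 0 and any signs ε_R ∈ {-1,1}, the Lebesgue measure of {p ∈ [0,1)² : ∑_{|R|=2^{-n}} ε_R h_R(p) = n+1-2k} equals 2^{-(n+1)}·C(n+1,k) for every 0 ≤ k ≤ n+1. -/

import Mathlib

open MeasureTheory Finset

noncomputable section

/-- The dyadic interval `[m·2^{-k}, (m+1)·2^{-k})`. -/
def dyadicI (k m : ℕ) : Set ℝ :=
  Set.Ico ((m : ℝ) * (2:ℝ)^(-(k:ℤ))) (((m : ℝ) + 1) * (2:ℝ)^(-(k:ℤ)))

/-- The Haar function of the dyadic interval `[m·2^{-k}, (m+1)·2^{-k})`: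
`-1` on the left half, `+1` on the right half, `0` outside. -/
def haarI (k m : ℕ) (x : ℝ) : ℝ :=
  if x ∈ Set.Ico ((m : ℝ) * (2:ℝ)^(-(k:ℤ))) (((m : ℝ) + 1/2) * (2:ℝ)^(-(k:ℤ))) then -1
  else if x ∈ Set.Ico (((m : ℝ) + 1/2) * (2:ℝ)^(-(k:ℤ))) (((m : ℝ) + 1) * (2:ℝ)^(-(k:ℤ))) then 1
  else 0

/-- The Haar function of the dyadic rectangle `[m·2^{-k},(m+1)·2^{-k}) × [m'·2^{-j},(m'+1)·2^{-j})`. -/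
def haarR (k m j m' : ℕ) (p : ℝ × ℝ) : ℝ := haarI k m p.1 * haarI j m' p.2

/-- The signed small ball sum `∑_{|R| = 2^{-n}} ε_R h_R`, where the rectangle of the layer `k`
with horizontal index `m` and vertical index `m'` carries the sign `ε k m m'`. -/
def signedSum (n : ℕ) (ε : ℕ → ℕ → ℕ → ℝ) (p : ℝ × ℝ) : ℝ :=
  ∑ k ∈ Finset.range (n+1), ∑ m ∈ Finset.range (2^k), ∑ m' ∈ Finset.range (2^(n-k)),
    ε k m m' * haarR k m (n-k) m' p

/-- `rad j t = 1` if the `j`-th binary digit `⌊2^j t⌋ mod 2` of `t` is `1`, `-1` otherwise. -/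
def rad (j : ℕ) (t : ℝ) : ℝ := if ⌊(2:ℝ)^j * t⌋ % 2 = 1 then 1 else -1
lemma two_zpow_pos (k : ℤ) : (0:ℝ) < (2:ℝ)^k := zpow_pos (by norm_num) k

lemma haarI_eq_zero {k m : ℕ} {x : ℝ} (h : x ∉ dyadicI k m) : haarI k m x = 0 := by
  have hpos := two_zpow_pos (-(k:ℤ))
  unfold haarI
  rw [if_neg, if_neg]
  · rintro ⟨h1, h2⟩
    exact h ⟨by nlinarith, h2⟩
  · rintro ⟨h1, h2⟩
    exact h ⟨h1, by nlinarith⟩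

lemma dyadicI_unique {k m q : ℕ} {x : ℝ} (h1 : x ∈ dyadicI k m) (h2 : x ∈ dyadicI k q) :
    m = q := by
  have hpos := two_zpow_pos (-(k:ℤ))
  obtain ⟨a1, a2⟩ := h1
  obtain ⟨b1, b2⟩ := h2
  have hmq : (m:ℝ) < q + 1 := by nlinarith
  have hqm : (q:ℝ) < m + 1 := by nlinarith
  have : m < q + 1 := by exact_mod_cast hmq
  have : q < m + 1 := by exact_mod_cast hqm
  omega

lemma zpow_neg_split {K k : ℕ} (hk : k ≤ K) :
    (2:ℝ)^(-(k:ℤ)) = ((2^(K-k) : ℕ) : ℝ) * (2:ℝ)^(-(K:ℤ)) := by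
  have h2 : (2:ℝ) ≠ 0 := by norm_num
  have : ((2^(K-k) : ℕ) : ℝ) = (2:ℝ)^(((K-k : ℕ)):ℤ) := by
    push_cast
    rw [zpow_natCast]
  rw [this, ← zpow_add₀ h2]
  congr 1
  omega

lemma bit_char {c q r a : ℕ} (ha : a = q * (2 * 2^c) + r) (hr : r < 2 * 2^c) :
    a.testBit c = decide (2^c ≤ r) := by
  have hH : 0 < 2^c := by positivity
  rw [Nat.testBit_eq_decide_div_mod_eq]
  have hdiv : a / 2^c = r / 2^c + 2 * q := by
    rw [ha, show q * (2 * 2^c) + r = r + (2*q) * 2^c by ring,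
      Nat.add_mul_div_right _ _ hH]
  have hrH : r / 2^c < 2 := Nat.div_lt_of_lt_mul (by omega)
  have hone : 2^c ≤ r ↔ r / 2^c = 1 := by
    constructor
    · intro h
      have h1 : 1 ≤ r / 2^c := (Nat.one_le_div_iff hH).mpr h
      omega
    · intro h
      have := Nat.div_mul_le_self r (2^c)
      rw [h, one_mul] at this
      exact this
  rcases Nat.lt_or_ge r (2^c) with h | h
  · have h0 : r / 2^c = 0 := Nat.div_eq_of_lt h
    simp [hdiv, h0, Nat.not_le.mpr h, Nat.mul_mod_right]
  · have h1 : r / 2^c = 1 := hone.mp h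
    have : (r / 2^c + 2 * q) % 2 = 1 := by omega
    simp [hdiv, this, h]

lemma key (K k : ℕ) (hk : k < K) (a : ℕ) (ha : a < 2^K) {x : ℝ} (hx : x ∈ dyadicI K a) :
    x ∈ dyadicI k (a / 2^(K-k)) ∧
      haarI k (a / 2^(K-k)) x = (if a.testBit (K-k-1) then 1 else -1) := by
  have hHpos : 0 < 2^(K-k-1) := by positivity
  have h2H : 2^(K-k) = 2 * 2^(K-k-1) := by
    rw [← pow_succ']
    congr 1
    omega
  set H : ℕ := 2^(K-k-1)
  set q : ℕ := a / 2^(K-k) with hqdef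
  set r : ℕ := a % 2^(K-k) with hrdef
  have haqr : a = q * (2*H) + r := by
    rw [hqdef, hrdef, ← h2H, Nat.mul_comm]
    exact (Nat.div_add_mod a _).symm
  have hrlt : r < 2*H := by rw [hrdef, ← h2H]; exact Nat.mod_lt _ (by positivity)
  have hbit : a.testBit (K-k-1) = decide (H ≤ r) := bit_char haqr hrlt
  have hexp : (q+1)*(2*H) = q*(2*H) + 2*H := by ring
  have hpos := two_zpow_pos (-(K:ℤ))
  set t : ℝ := (2:ℝ)^(-(K:ℤ)) with htdef
  have hs : (2:ℝ)^(-(k:ℤ)) = ((2^(K-k) : ℕ) : ℝ) * t := zpow_neg_split hk.le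
  have hxa1 : (a:ℝ) * t ≤ x := hx.1
  have hxa2 : x < ((a:ℝ)+1) * t := hx.2
  have hmono : ∀ u v : ℕ, u ≤ v → (u:ℝ) * t ≤ (v:ℝ) * t := fun u v huv => by
    have : (u:ℝ) ≤ v := by exact_mod_cast huv
    nlinarith
  have hleft : (q:ℝ) * (2:ℝ)^(-(k:ℤ)) = ((q*(2*H) : ℕ) : ℝ) * t := by
    rw [hs, h2H]; push_cast; ring
  have hmid : ((q:ℝ) + 1/2) * (2:ℝ)^(-(k:ℤ)) = ((q*(2*H) + H : ℕ) : ℝ) * t := by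
    rw [hs, h2H]; push_cast; ring
  have hright : ((q:ℝ) + 1) * (2:ℝ)^(-(k:ℤ)) = (((q+1)*(2*H) : ℕ) : ℝ) * t := by
    rw [hs, h2H]; push_cast; ring
  have hxleft : ((q*(2*H) : ℕ) : ℝ) * t ≤ x :=
    le_trans (hmono _ a (by omega)) hxa1
  have hxright : x < (((q+1)*(2*H) : ℕ) : ℝ) * t := by
    have := hmono (a+1) ((q+1)*(2*H)) (by omega)
    push_cast at this ⊢
    linarith
  constructor
  · exact ⟨by rw [hleft]; exact hxleft, by rw [hright]; exact hxright⟩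
  · rcases Nat.lt_or_ge r H with h | h
    · have hbitval : a.testBit (K-k-1) = false := by rw [hbit]; simp [Nat.not_le.mpr h]
      have hxmid : x < ((q*(2*H) + H : ℕ) : ℝ) * t := by
        have := hmono (a+1) (q*(2*H)+H) (by omega)
        push_cast at this ⊢
        linarith
      rw [hbitval]
      unfold haarI
      rw [if_pos ⟨by rw [hleft]; exact hxleft, by rw [hmid]; exact hxmid⟩]
      simp
    · have hbitval : a.testBit (K-k-1) = true := by rw [hbit]; simp [h]
      have hxmid : ((q*(2*H) + H : ℕ) : ℝ) * t ≤ x :=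
        le_trans (hmono _ a (by omega)) hxa1
      rw [hbitval]
      unfold haarI
      rw [if_neg, if_pos ⟨by rw [hmid]; exact hxmid, by rw [hright]; exact hxright⟩]
      · simp
      · rintro ⟨-, h2⟩
        rw [hmid] at h2
        have := not_lt.mpr hxmid
        exact this h2

lemma haar_sum_collapse {K : ℕ} (k : ℕ) (hk : k < K) {a : ℕ} (ha : a < 2^K) {x : ℝ}
    (hx : x ∈ dyadicI K a) (f : ℕ → ℝ) :
    ∑ m ∈ Finset.range (2^k), f m * haarI k m x
      = f (a / 2^(K-k)) * (if a.testBit (K-k-1) then 1 else -1) := by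
  obtain ⟨hmem, hval⟩ := key K k hk a ha hx
  have hqlt : a / 2^(K-k) < 2^k := by
    apply Nat.div_lt_of_lt_mul
    rw [← pow_add]
    rwa [show K - k + k = K by omega]
  rw [Finset.sum_eq_single (a / 2^(K-k))]
  · rw [hval]
  · intro m _ hne
    rw [haarI_eq_zero, mul_zero]
    intro hmem'
    exact hne (dyadicI_unique hmem' hmem)
  · intro h
    exact absurd (Finset.mem_range.mpr hqlt) h

def Xterm (n : ℕ) (ε : ℕ → ℕ → ℕ → ℝ) (a b j : ℕ) : ℝ :=
  ε j (a / 2^(n+1-j)) (b / 2^(j+1)) *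
    ((if a.testBit (n-j) then (1:ℝ) else -1) * (if b.testBit j then (1:ℝ) else -1))

lemma signedSum_eq (n : ℕ) (ε : ℕ → ℕ → ℕ → ℝ) {a b : ℕ}
    (ha : a < 2^(n+1)) (hb : b < 2^(n+1)) {p : ℝ × ℝ}
    (hp1 : p.1 ∈ dyadicI (n+1) a) (hp2 : p.2 ∈ dyadicI (n+1) b) :
    signedSum n ε p = ∑ j ∈ Finset.range (n+1), Xterm n ε a b j := by
  unfold signedSum
  refine Finset.sum_congr rfl fun j hj => ?_
  have hj' : j ≤ n := by
    have := Finset.mem_range.mp hj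
    omega
  have e1 : n + 1 - (n - j) = j + 1 := by omega
  have e2 : n + 1 - (n - j) - 1 = j := by omega
  have step1 : ∀ m, ∑ m' ∈ Finset.range (2^(n-j)), ε j m m' * haarR j m (n-j) m' p
      = (ε j m (b / 2^(j+1)) * (if b.testBit j then (1:ℝ) else -1)) * haarI j m p.1 := by
    intro m
    have h := haar_sum_collapse (K := n+1) (n-j) (by omega) hb hp2
      (fun m' => ε j m m' * haarI j m p.1)
    rw [e2] at h; rw [e1] at h
    calc ∑ m' ∈ Finset.range (2^(n-j)), ε j m m' * haarR j m (n-j) m' p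
        = ∑ m' ∈ Finset.range (2^(n-j)), (ε j m m' * haarI j m p.1) * haarI (n-j) m' p.2 := by
          refine Finset.sum_congr rfl fun m' _ => ?_
          unfold haarR
          ring
      _ = (ε j m (b / 2^(j+1)) * haarI j m p.1) * (if b.testBit j then (1:ℝ) else -1) := h
      _ = (ε j m (b / 2^(j+1)) * (if b.testBit j then (1:ℝ) else -1)) * haarI j m p.1 := by ring
  rw [Finset.sum_congr rfl (fun m _ => step1 m)]
  have h2 := haar_sum_collapse (K := n+1) j (by omega) ha hp1
    (fun m => ε j m (b / 2^(j+1)) * (if b.testBit j then (1:ℝ) else -1))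
  rw [show n + 1 - j - 1 = n - j by omega] at h2
  rw [h2]
  unfold Xterm
  ring

lemma Xterm_pm (n : ℕ) {ε : ℕ → ℕ → ℕ → ℝ} (hε : ∀ j m m', ε j m m' = 1 ∨ ε j m m' = -1)
    (a b j : ℕ) : Xterm n ε a b j = 1 ∨ Xterm n ε a b j = -1 := by
  unfold Xterm
  rcases hε j (a / 2^(n+1-j)) (b / 2^(j+1)) with h | h <;>
    rw [h] <;> by_cases h1 : a.testBit (n-j) <;> by_cases h2 : b.testBit j <;>
    simp [h1, h2]

lemma sum_pm_eq {X : ℕ → ℝ} {S : Finset ℕ} (h : ∀ j ∈ S, X j = 1 ∨ X j = -1) :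
    ∑ j ∈ S, X j = S.card - 2 * (S.filter (fun j => X j = -1)).card := by
  classical
  rw [← Finset.sum_filter_add_sum_filter_not S (fun j => X j = -1)]
  have h1 : ∑ j ∈ S.filter (fun j => X j = -1), X j
      = -((S.filter (fun j => X j = -1)).card : ℝ) := by
    rw [Finset.sum_congr rfl (fun j hj => (Finset.mem_filter.mp hj).2), Finset.sum_const]
    simp
  have h2 : ∑ j ∈ S.filter (fun j => ¬ X j = -1), X j
      = ((S.filter (fun j => ¬ X j = -1)).card : ℝ) := by
    have hone : ∀ j ∈ S.filter (fun j => ¬ X j = -1), X j = 1 := by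
      intro j hj
      have hm := Finset.mem_filter.mp hj
      rcases h j hm.1 with h' | h'
      · exact h'
      · exact absurd h' hm.2
    rw [Finset.sum_congr rfl hone, Finset.sum_const]
    simp
  rw [h1, h2]
  have h3 := Finset.card_filter_add_card_filter_not (s := S)
    (p := fun j => X j = -1)
  have h4 : ((S.filter (fun j => X j = -1)).card : ℝ)
      + ((S.filter (fun j => ¬ X j = -1)).card : ℝ) = (S.card : ℝ) := by
    exact_mod_cast congrArg (Nat.cast (R := ℝ)) h3
  linarith

lemma Xvec_inj (n : ℕ) {ε : ℕ → ℕ → ℕ → ℝ} (hε : ∀ j m m', ε j m m' = 1 ∨ ε j m m' = -1)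
    (b : ℕ) {a a' : ℕ} (ha : a < 2^(n+1)) (ha' : a' < 2^(n+1))
    (h : ∀ j < n+1, (Xterm n ε a b j = -1 ↔ Xterm n ε a' b j = -1)) : a = a' := by
  have key : ∀ j, j ≤ n+1 → a / 2^(n+1-j) = a' / 2^(n+1-j) := by
    intro j
    induction j with
    | zero =>
      intro _
      simp only [Nat.sub_zero]
      rw [Nat.div_eq_of_lt ha, Nat.div_eq_of_lt ha']
    | succ j IH =>
      intro hj1
      have IHj := IH (by omega)
      have hc : n + 1 - j = (n - j) + 1 := by omega
      have hc2 : n + 1 - (j+1) = n - j := by omega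
      have hbool : ∀ (u : Bool), u = true ∨ u = false := fun u => by cases u <;> simp
      have hcontra : ∀ (hXX : Xterm n ε a' b j = - Xterm n ε a b j), False := by
        intro hXX
        rcases Xterm_pm n hε a b j with hx | hx
        · have : Xterm n ε a b j = -1 := (h j (by omega)).mpr (by simp [hXX, hx])
          rw [hx] at this; norm_num at this
        · have : Xterm n ε a' b j = -1 := (h j (by omega)).mp hx
          rw [hXX, hx] at this; norm_num at this
      have hbits : a.testBit (n-j) = a'.testBit (n-j) := by
        rcases hbool (a.testBit (n-j)) with hta | hta <;>
          rcases hbool (a'.testBit (n-j)) with hta' | hta' <;> rw [hta, hta']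
        · exfalso
          apply hcontra
          unfold Xterm
          rw [IHj, hta, hta']
          norm_num
          split_ifs <;> ring
        · exfalso
          apply hcontra
          unfold Xterm
          rw [IHj, hta, hta']
          norm_num
          split_ifs <;> ring
      rw [hc2]
      rw [hc] at IHj
      have hdd : ∀ m : ℕ, m / 2^((n-j)+1) = (m / 2^(n-j)) / 2 := by
        intro m
        rw [Nat.div_div_eq_div_mul, ← pow_succ]
      rw [hdd, hdd] at IHj
      have hm : a / 2^(n-j) % 2 = a' / 2^(n-j) % 2 := by
        have t1 : (decide (a / 2^(n-j) % 2 = 1)) = (decide (a' / 2^(n-j) % 2 = 1)) := by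
          rw [← Nat.testBit_eq_decide_div_mod_eq, ← Nat.testBit_eq_decide_div_mod_eq, hbits]
        have m1 : a / 2^(n-j) % 2 < 2 := Nat.mod_lt _ (by norm_num)
        have m2 : a' / 2^(n-j) % 2 < 2 := Nat.mod_lt _ (by norm_num)
        have m1' : a / 2^(n-j) % 2 = 0 ∨ a / 2^(n-j) % 2 = 1 := by omega
        have m2' : a' / 2^(n-j) % 2 = 0 ∨ a' / 2^(n-j) % 2 = 1 := by omega
        rcases m1' with e | e <;> rcases m2' with e' | e'
        · rw [e, e']
        · exfalso; rw [e, e'] at t1; simp at t1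
        · exfalso; rw [e, e'] at t1; simp at t1
        · rw [e, e']
      omega
  have := key (n+1) le_rfl
  simpa using this

lemma count_a (n k : ℕ) {ε : ℕ → ℕ → ℕ → ℝ} (hε : ∀ j m m', ε j m m' = 1 ∨ ε j m m' = -1)
    (b : ℕ) :
    ((Finset.range (2^(n+1))).filter
      (fun a => ∑ j ∈ Finset.range (n+1), Xterm n ε a b j = (n:ℝ) + 1 - 2*k)).card
      = (n+1).choose k := by
  classical
  set Φ : ℕ → Finset ℕ := fun a => (Finset.range (n+1)).filter (fun j => Xterm n ε a b j = -1)
    with hΦ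
  -- the filter predicate is equivalent to card of Φ being k
  have hpred : ∀ a, (∑ j ∈ Finset.range (n+1), Xterm n ε a b j = (n:ℝ) + 1 - 2*k)
      ↔ (Φ a).card = k := by
    intro a
    rw [sum_pm_eq (fun j _ => Xterm_pm n hε a b j)]
    rw [Finset.card_range]
    constructor
    · intro hh
      have : ((Φ a).card : ℝ) = (k : ℝ) := by push_cast at hh ⊢; linarith
      exact_mod_cast this
    · intro hh
      rw [hΦ] at hh
      rw [hh]
      push_cast
      ring
  have hinj : Set.InjOn Φ ↑(Finset.range (2^(n+1))) := by
    intro a hA a' hA' hEq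
    have ha : a < 2^(n+1) := Finset.mem_range.mp hA
    have ha' : a' < 2^(n+1) := Finset.mem_range.mp hA'
    refine Xvec_inj n hε b ha ha' fun j hj => ?_
    constructor
    · intro hx
      have : j ∈ Φ a := Finset.mem_filter.mpr ⟨Finset.mem_range.mpr hj, hx⟩
      rw [hEq] at this
      exact (Finset.mem_filter.mp this).2
    · intro hx
      have : j ∈ Φ a' := Finset.mem_filter.mpr ⟨Finset.mem_range.mpr hj, hx⟩
      rw [← hEq] at this
      exact (Finset.mem_filter.mp this).2
  have himage : (Finset.range (2^(n+1))).image Φ = (Finset.range (n+1)).powerset := by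
    apply Finset.eq_of_subset_of_card_le
    · intro s hs
      obtain ⟨a, _, rfl⟩ := Finset.mem_image.mp hs
      exact Finset.mem_powerset.mpr (Finset.filter_subset _ _)
    · rw [Finset.card_powerset, Finset.card_range,
        Finset.card_image_of_injOn hinj, Finset.card_range]
  calc ((Finset.range (2^(n+1))).filter
        (fun a => ∑ j ∈ Finset.range (n+1), Xterm n ε a b j = (n:ℝ) + 1 - 2*k)).card
      = ((Finset.range (2^(n+1))).filter (fun a => (Φ a).card = k)).card := by
        congr 1
        exact Finset.filter_congr (fun a _ => by rw [hpred a])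
    _ = (((Finset.range (2^(n+1))).filter (fun a => (Φ a).card = k)).image Φ).card := by
        rw [Finset.card_image_of_injOn (hinj.mono (by
          intro a hA
          exact Finset.mem_coe.mpr (Finset.mem_of_mem_filter a hA)))]
    _ = (((Finset.range (2^(n+1))).image Φ).filter (fun s => s.card = k)).card := by
        rw [Finset.filter_image]
    _ = (Finset.powersetCard k (Finset.range (n+1))).card := by
        rw [himage, Finset.powersetCard_eq_filter]
    _ = (n+1).choose k := by
        rw [Finset.card_powersetCard, Finset.card_range]

lemma two_pow_mul_zpow_neg (K : ℕ) : ((2:ℝ)^K) * (2:ℝ)^(-(K:ℤ)) = 1 := by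
  rw [show ((2:ℝ)^K) = (2:ℝ)^((K:ℕ):ℤ) from (zpow_natCast _ _).symm,
    ← zpow_add₀ (by norm_num : (2:ℝ) ≠ 0)]
  simp

lemma dyadic_mem_unit {K a : ℕ} (ha : a < 2^K) {x : ℝ} (hx : x ∈ dyadicI K a) :
    x ∈ Set.Ico (0:ℝ) 1 := by
  have hpos := two_zpow_pos (-(K:ℤ))
  obtain ⟨h1, h2⟩ := hx
  constructor
  · have : (0:ℝ) ≤ (a:ℝ) * (2:ℝ)^(-(K:ℤ)) := by positivity
    linarith
  · have hcast : ((a:ℝ) + 1) ≤ (2:ℝ)^K := by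
      have : ((a+1 : ℕ) : ℝ) ≤ ((2^K : ℕ) : ℝ) := by exact_mod_cast ha
      push_cast at this
      linarith
    have : ((a:ℝ) + 1) * (2:ℝ)^(-(K:ℤ)) ≤ ((2:ℝ)^K) * (2:ℝ)^(-(K:ℤ)) :=
      mul_le_mul_of_nonneg_right hcast hpos.le
    rw [two_pow_mul_zpow_neg] at this
    linarith

lemma exists_dyadic (K : ℕ) {x : ℝ} (hx : x ∈ Set.Ico (0:ℝ) 1) :
    ∃ a, a < 2^K ∧ x ∈ dyadicI K a := by
  have hpos : (0:ℝ) < (2:ℝ)^K := by positivity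
  have hnpos := two_zpow_pos (-(K:ℤ))
  have hone := two_pow_mul_zpow_neg K
  refine ⟨⌊x * 2^K⌋₊, ?_, ?_, ?_⟩
  · rw [Nat.floor_lt (by nlinarith [hx.1])]
    push_cast
    nlinarith [hx.2]
  · have h1 : (⌊x * 2^K⌋₊ : ℝ) ≤ x * 2^K := Nat.floor_le (by nlinarith [hx.1])
    have := mul_le_mul_of_nonneg_right h1 hnpos.le
    rw [mul_assoc, hone, mul_one] at this
    exact this
  · have h2 : x * 2^K < ⌊x * 2^K⌋₊ + 1 := Nat.lt_floor_add_one _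
    have := mul_lt_mul_of_pos_right h2 hnpos
    rw [mul_assoc, hone, mul_one] at this
    exact this

lemma volume_dyadicI (K a : ℕ) :
    volume (dyadicI K a) = ENNReal.ofReal ((2:ℝ)^(-(K:ℤ))) := by
  unfold dyadicI
  rw [Real.volume_Ico]
  congr 1
  ring
/-- On the unit square, the level set `{signedSum = n+1-2k}` has measure
`2^{-(n+1)} · C(n+1,k)` for any choice of signs. -/
theorem level_sets_unit_square (n k : ℕ) (hk : k ≤ n + 1)
    (ε : ℕ → ℕ → ℕ → ℝ) (hε : ∀ j m m', ε j m m' = 1 ∨ ε j m m' = -1) :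
    volume {p : ℝ × ℝ | p.1 ∈ Set.Ico (0:ℝ) 1 ∧ p.2 ∈ Set.Ico (0:ℝ) 1 ∧
        signedSum n ε p = (n : ℝ) + 1 - 2 * k}
      = ENNReal.ofReal (((n+1).choose k : ℝ) / 2^(n+1)) := by
  classical
  set T : Finset (ℕ × ℕ) := ((Finset.range (2^(n+1))) ×ˢ (Finset.range (2^(n+1)))).filter
    (fun ab => ∑ j ∈ Finset.range (n+1), Xterm n ε ab.1 ab.2 j = (n:ℝ) + 1 - 2*k) with hT
  have hseteq : {p : ℝ × ℝ | p.1 ∈ Set.Ico (0:ℝ) 1 ∧ p.2 ∈ Set.Ico (0:ℝ) 1 ∧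
        signedSum n ε p = (n : ℝ) + 1 - 2 * k}
      = ⋃ ab ∈ T, (dyadicI (n+1) ab.1 ×ˢ dyadicI (n+1) ab.2) := by
    ext p
    simp only [Set.mem_setOf_eq, Set.mem_iUnion]
    constructor
    · rintro ⟨hx, hy, hsum⟩
      obtain ⟨a, haN, hax⟩ := exists_dyadic (n+1) hx
      obtain ⟨b, hbN, hby⟩ := exists_dyadic (n+1) hy
      refine ⟨(a, b), ?_, hax, hby⟩
      rw [hT, Finset.mem_filter]
      refine ⟨Finset.mem_product.mpr ⟨Finset.mem_range.mpr haN, Finset.mem_range.mpr hbN⟩, ?_⟩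
      rw [← signedSum_eq n ε haN hbN hax hby]
      exact hsum
    · rintro ⟨⟨a, b⟩, habT, hpc⟩
      rw [hT, Finset.mem_filter] at habT
      obtain ⟨habm, hsum⟩ := habT
      have haN : a < 2^(n+1) := Finset.mem_range.mp (Finset.mem_product.mp habm).1
      have hbN : b < 2^(n+1) := Finset.mem_range.mp (Finset.mem_product.mp habm).2
      obtain ⟨h1, h2⟩ := hpc
      refine ⟨dyadic_mem_unit haN h1, dyadic_mem_unit hbN h2, ?_⟩
      rw [signedSum_eq n ε haN hbN h1 h2]
      exact hsum
  rw [hseteq]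
  have hdisj : (↑T : Set (ℕ × ℕ)).PairwiseDisjoint
      (fun ab : ℕ × ℕ => (dyadicI (n+1) ab.1 ×ˢ dyadicI (n+1) ab.2)) := by
    intro ab _ cd _ hne
    rw [Function.onFun, Set.disjoint_left]
    rintro p ⟨hp1, hp2⟩ ⟨hq1, hq2⟩
    exact hne (Prod.ext (dyadicI_unique hp1 hq1) (dyadicI_unique hp2 hq2))
  have hmeas : ∀ ab : ℕ × ℕ, ab ∈ T →
      MeasurableSet ((dyadicI (n+1) ab.1 ×ˢ dyadicI (n+1) ab.2) : Set (ℝ × ℝ)) := by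
    intro ab _
    unfold dyadicI
    exact measurableSet_Ico.prod measurableSet_Ico
  rw [measure_biUnion_finset hdisj hmeas]
  have hcellvol : ∀ ab : ℕ × ℕ,
      volume ((dyadicI (n+1) ab.1 ×ˢ dyadicI (n+1) ab.2) : Set (ℝ × ℝ))
      = ENNReal.ofReal ((2:ℝ)^(-((n+1:ℕ):ℤ))) * ENNReal.ofReal ((2:ℝ)^(-((n+1:ℕ):ℤ))) := by
    intro ab
    rw [MeasureTheory.Measure.volume_eq_prod, MeasureTheory.Measure.prod_prod,
      volume_dyadicI, volume_dyadicI]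
  rw [Finset.sum_congr rfl (fun ab _ => hcellvol ab), Finset.sum_const]
  have hcard : T.card = 2^(n+1) * (n+1).choose k := by
    rw [hT, Finset.card_filter, Finset.sum_product, Finset.sum_comm]
    have hinner : ∀ b ∈ Finset.range (2^(n+1)),
        (∑ a ∈ Finset.range (2^(n+1)),
          if (∑ j ∈ Finset.range (n+1), Xterm n ε a b j = (n:ℝ) + 1 - 2*k) then 1 else 0)
        = (n+1).choose k := by
      intro b _
      rw [← Finset.card_filter]
      exact count_a n k hε b
    rw [Finset.sum_congr rfl hinner, Finset.sum_const, Finset.card_range, smul_eq_mul]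
  rw [hcard, nsmul_eq_mul]
  have hnpos := two_zpow_pos (-((n+1:ℕ):ℤ))
  rw [← ENNReal.ofReal_mul hnpos.le, ← ENNReal.ofReal_natCast,
    ← ENNReal.ofReal_mul (by positivity)]
  congr 1
  have ht : (2:ℝ)^(-((n+1:ℕ):ℤ)) = ((2:ℝ)^(n+1))⁻¹ := by
    rw [zpow_neg, zpow_natCast]
  rw [ht]
  push_cast
  have h2 : (0:ℝ) < 2^(n+1) := by positivity
  field_simp
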